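/- For every integer k ≥ 1 and every positive integer n, Ω_{2k}(n) = Σ_{r=1}^{k} d_{k,r} · (S_1(n))^r, as an identity of rational numbers, where d_{k,r} = Σ_{m=r}^{k} (2^r / (2m)!) · R(k,m) · Ps_m^(r). -/

import Mathlib

/-- `S k n = 1^k + 2^k + ⋯ + n^k`, the sum of the `k`-th powers of the first `n`
positive integers; in particular `S 1 n = n(n+1)/2`. -/
def S (k n : ℕ) : ℕ := ∑ i ∈ Finset.Icc 1 n, i ^ k

/-- `Ω k n = n^k − (n-1)^k + ⋯ + (-1)^{n-1} 1^k`, the alternating sum of the `k`-th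
powers of the first `n` positive integers. -/
def Om (k n : ℕ) : ℤ := ∑ i ∈ Finset.Icc 1 n, (-1 : ℤ) ^ (n - i) * ((i ^ k : ℕ) : ℤ)

/-- `R k m = ∑_{j=0}^m (-1)^j C(2m, j) (m-j)^{2k}`, the sequence A304330. -/
def R (k m : ℕ) : ℤ :=
  ∑ j ∈ Finset.range (m + 1),
    (-1 : ℤ) ^ j * ((2 * m).choose j : ℤ) * (((m - j) ^ (2 * k) : ℕ) : ℤ)

/-- The (signed) Legendre-Stirling number of the first kind `Ps_m^{(r)}`: the
coefficient of `x^r` in `∏_{j=0}^{m-1} (x − j(j+1))`. -/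
noncomputable def Ps (m r : ℕ) : ℤ :=
  (∏ j ∈ Finset.range m, (Polynomial.X - Polynomial.C ((j * (j + 1) : ℕ) : ℤ))).coeff r

/-- The coefficients `d_{k,r}`. -/
noncomputable def d (k r : ℕ) : ℚ :=
  ∑ m ∈ Finset.Icc r k,
    (2 ^ r / (Nat.factorial (2 * m) : ℚ)) * (R k m : ℚ) * (Ps m r : ℚ)

open Polynomial Finset


lemma natDegree_delta_lt (p : Polynomial ℤ) (hp : 1 ≤ p.natDegree) :
    (p.comp (X + 1) - p).natDegree < p.natDegree := by
  have hp0 : p ≠ 0 := fun h => by simp [h] at hp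
  have hX : (X + 1 : ℤ[X]) = X + C 1 := by simp
  have hnd : (p.comp (X + 1)).natDegree = p.natDegree := by
    rw [natDegree_comp, hX, natDegree_X_add_C, mul_one]
  have hl : (p.comp (X + 1)).leadingCoeff = p.leadingCoeff := by
    rw [leadingCoeff_comp (by rw [hX, natDegree_X_add_C]; exact one_ne_zero)]
    rw [hX, leadingCoeff_X_add_C, one_pow, mul_one]
  have hc0 : p.comp (X + 1) ≠ 0 := by
    intro h
    rw [h, leadingCoeff_zero] at hl
    exact hp0 (leadingCoeff_eq_zero.mp hl.symm)
  have hdeg : (p.comp (X + 1)).degree = p.degree := by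
    rw [degree_eq_natDegree hc0, degree_eq_natDegree hp0, hnd]
  by_cases hq : p.comp (X + 1) - p = 0
  · rw [hq]; simp; omega
  · have h2 : (p.comp (X+1) - p).degree < p.degree := by
      rw [← hdeg]; exact degree_sub_lt hdeg hc0 hl
    exact natDegree_lt_natDegree hq h2

lemma alt_sum_poly : ∀ (N : ℕ) (p : Polynomial ℤ), p.natDegree < N →
    ∑ j ∈ Finset.range (N+1), (-1:ℤ)^j * ((N.choose j : ℕ) : ℤ) * p.eval (j : ℤ) = 0 := by
  intro N
  induction N with
  | zero => intro p h; omega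
  | succ N ih =>
    intro p hp
    set q : ℤ[X] := p.comp (X + 1) - p with hqdef
    have hqe : ∀ i : ℕ, q.eval (i:ℤ) = p.eval ((i:ℤ)+1) - p.eval (i:ℤ) := by
      intro i
      simp [hqdef, eval_comp]
    have main : ∑ j ∈ Finset.range (N+2), (-1:ℤ)^j * (((N+1).choose j : ℕ) : ℤ) * p.eval (j:ℤ)
        = - ∑ i ∈ Finset.range (N+1), (-1:ℤ)^i * ((N.choose i : ℕ) : ℤ) * q.eval (i:ℤ) := by
      have e1 : ∑ j ∈ Finset.range (N+2), (-1:ℤ)^j * (((N+1).choose j : ℕ) : ℤ) * p.eval (j:ℤ)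
          = (∑ i ∈ Finset.range (N+1), (-1:ℤ)^(i+1) * ((N.choose i + N.choose (i+1) : ℕ) : ℤ)
              * p.eval ((i:ℤ)+1)) + p.eval 0 := by
        rw [Finset.sum_range_succ' _ (N+1)]
        simp [Nat.choose_succ_succ]
      have e2 : (∑ i ∈ Finset.range (N+1), (-1:ℤ)^(i+1) * ((N.choose (i+1) : ℕ) : ℤ)
              * p.eval ((i:ℤ)+1)) + p.eval 0
          = ∑ j ∈ Finset.range (N+1), (-1:ℤ)^j * ((N.choose j : ℕ) : ℤ) * p.eval (j:ℤ) := by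
        have h := Finset.sum_range_succ' (fun j => (-1:ℤ)^j * ((N.choose j : ℕ) : ℤ) * p.eval (j:ℤ)) (N+1)
        rw [Finset.sum_range_succ _ (N+1)] at h
        simp only [Nat.choose_succ_self, Nat.cast_zero, mul_zero, zero_mul, add_zero] at h
        push_cast at h
        simp at h
        rw [h]
      calc ∑ j ∈ Finset.range (N+2), (-1:ℤ)^j * (((N+1).choose j : ℕ) : ℤ) * p.eval (j:ℤ)
          = (∑ i ∈ Finset.range (N+1), (-1:ℤ)^(i+1) * ((N.choose i + N.choose (i+1) : ℕ) : ℤ)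
              * p.eval ((i:ℤ)+1)) + p.eval 0 := e1
        _ = ((∑ i ∈ Finset.range (N+1), (-1:ℤ)^(i+1) * ((N.choose (i+1) : ℕ) : ℤ) * p.eval ((i:ℤ)+1)) + p.eval 0)
            - ∑ i ∈ Finset.range (N+1), (-1:ℤ)^i * ((N.choose i : ℕ) : ℤ) * p.eval ((i:ℤ)+1) := by
            have h3 : ∑ i ∈ Finset.range (N+1), (-1:ℤ)^(i+1) * ((N.choose i + N.choose (i+1) : ℕ) : ℤ) * p.eval ((i:ℤ)+1)
                = (∑ i ∈ Finset.range (N+1), (-1:ℤ)^(i+1) * ((N.choose (i+1) : ℕ) : ℤ) * p.eval ((i:ℤ)+1))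
                  - ∑ i ∈ Finset.range (N+1), (-1:ℤ)^i * ((N.choose i : ℕ) : ℤ) * p.eval ((i:ℤ)+1) := by
              rw [← Finset.sum_sub_distrib]
              apply Finset.sum_congr rfl
              intro i _
              push_cast
              ring
            rw [h3]; ring
        _ = - ∑ i ∈ Finset.range (N+1), (-1:ℤ)^i * ((N.choose i : ℕ) : ℤ) * q.eval (i:ℤ) := by
            rw [e2, ← Finset.sum_sub_distrib, ← Finset.sum_neg_distrib]
            apply Finset.sum_congr rfl
            intro i _
            rw [hqe]
            ring
    by_cases hq0 : q = 0
    · rw [main, hq0]; simp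
    · have h1 : 1 ≤ p.natDegree := by
        by_contra h
        push_neg at h
        have h0 : p.natDegree = 0 := by omega
        obtain ⟨a, ha⟩ := natDegree_eq_zero.mp h0
        apply hq0
        rw [hqdef, ← ha]
        simp
      have h3 : q.natDegree < N := lt_of_lt_of_le (natDegree_delta_lt p h1) (by omega)
      rw [main, ih q h3, neg_zero]


lemma R_zero (k : ℕ) (hk : 1 ≤ k) : R k 0 = 0 := by
  simp [R]
  omega

lemma R_one_one : R 1 1 = 1 := by
  simp [R, Finset.sum_range_succ]

lemma R_eq_half (k m : ℕ) (hk : 1 ≤ k) :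
    2 * R k m = ∑ j ∈ Finset.range (2*m+1),
      (-1:ℤ)^j * ((2*m).choose j : ℤ) * ((m:ℤ) - (j:ℤ))^(2*k) := by
  set f : ℕ → ℤ := fun j => (-1:ℤ)^j * ((2*m).choose j : ℤ) * ((m:ℤ) - (j:ℤ))^(2*k) with hf
  have hsplit : ∑ j ∈ Finset.range (2*m+1), f j
      = (∑ j ∈ Finset.range (m+1), f j) + ∑ j ∈ Finset.Ico (m+1) (2*m+1), f j := by
    rw [Finset.range_eq_Ico, ← Finset.sum_Ico_consecutive _ (Nat.zero_le (m+1)) (by omega), Finset.range_eq_Ico]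
  have hrefl : ∑ j ∈ Finset.Ico (m+1) (2*m+1), f j = ∑ i ∈ Finset.range m, f i := by
    apply Finset.sum_nbij' (fun j => 2*m - j) (fun i => 2*m - i)
    · intro a ha
      simp only [Finset.mem_Ico] at ha
      simp only [Finset.mem_range]
      omega
    · intro a ha
      simp only [Finset.mem_range] at ha
      simp only [Finset.mem_Ico]
      omega
    · intro a ha
      simp only [Finset.mem_Ico] at ha
      omega
    · intro a ha
      simp only [Finset.mem_range] at ha
      omega
    · intro j hj
      simp only [Finset.mem_Ico] at hj
      simp only [hf]
      have h1 : (-1:ℤ)^(2*m-j) = (-1:ℤ)^j := by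
        have : (2*m-j) + j = 2*m := by omega
        have hm : (-1:ℤ)^((2*m-j)+j) = 1 := by rw [this, pow_mul]; simp
        rw [pow_add] at hm
        have hj2 : ((-1:ℤ)^j) * ((-1:ℤ)^j) = 1 := by
          rw [← pow_add]
          rw [show j + j = 2*j by ring, pow_mul]
          simp
        calc (-1:ℤ)^(2*m-j) = (-1:ℤ)^(2*m-j) * (((-1:ℤ)^j) * ((-1:ℤ)^j)) := by rw [hj2, mul_one]
          _ = ((-1:ℤ)^(2*m-j) * (-1:ℤ)^j) * (-1:ℤ)^j := by ring
          _ = (-1:ℤ)^j := by rw [hm, one_mul]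
      have h2 : (2*m).choose (2*m - j) = (2*m).choose j := Nat.choose_symm (by omega)
      have h3 : ((m:ℤ) - ((2*m - j : ℕ) : ℤ))^(2*k) = ((m:ℤ) - (j:ℤ))^(2*k) := by
        have hc : ((2*m - j : ℕ) : ℤ) = 2*(m:ℤ) - (j:ℤ) := by
          push_cast [Nat.cast_sub (by omega : j ≤ 2*m)]
          ring
        rw [hc, show (m:ℤ) - (2*(m:ℤ) - (j:ℤ)) = -((m:ℤ) - (j:ℤ)) by ring]
        exact Even.neg_pow (by exact even_two_mul k) _
      rw [h1, h2, h3]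
  have hlast : f m = 0 := by
    simp only [hf]
    have : ((m:ℤ) - (m:ℤ)) = 0 := by ring
    rw [this, zero_pow (by omega)]
    ring
  have hhalf : ∑ j ∈ Finset.range (m+1), f j = R k m := by
    apply Finset.sum_congr rfl
    intro j hj
    simp only [Finset.mem_range] at hj
    simp only [hf, R]
    have : (((m - j : ℕ)) : ℤ) = (m:ℤ) - (j:ℤ) := by
      push_cast [Nat.cast_sub (by omega : j ≤ m)]
      ring
    rw [show (((m-j)^(2*k) : ℕ) : ℤ) = (((m-j:ℕ)):ℤ)^(2*k) by push_cast; ring, this]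
  have hinit : ∑ i ∈ Finset.range m, f i = R k m := by
    have := Finset.sum_range_succ f m
    rw [hlast, add_zero] at this
    rw [← this, hhalf]
  rw [hsplit, hrefl, hhalf, hinit]
  ring

lemma R_vanish (k m : ℕ) (hk : 1 ≤ k) (h : k < m) : R k m = 0 := by
  have key : ∑ j ∈ Finset.range (2*m+1),
      (-1:ℤ)^j * ((2*m).choose j : ℤ) * ((m:ℤ) - (j:ℤ))^(2*k) = 0 := by
    have hdeg : ((C (m:ℤ) - X)^(2*k)).natDegree < 2*m := by
      rw [natDegree_pow]
      have : (C (m:ℤ) - X).natDegree = 1 := by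
        rw [show (C (m:ℤ) - X) = -(X - C (m:ℤ)) by ring, natDegree_neg, natDegree_X_sub_C]
      rw [this, mul_one]
      omega
    have halt := alt_sum_poly (2*m) ((C (m:ℤ) - X)^(2*k)) hdeg
    rw [← halt]
    apply Finset.sum_congr rfl
    intro j _
    rw [eval_pow]
    simp
  have := R_eq_half k m hk
  omega

lemma choose_helper (n i : ℕ) :
    (i+1) * ((n+2) - (i+1)) * ((n+2).choose (i+1)) = (n+2)*(n+1)*(n.choose i) := by
  have h1 : (n+1) * (n.choose i) = (n+1).choose (i+1) * (i+1) := Nat.add_one_mul_choose_eq n i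
  have h2 : (n+1).choose (i+1) * (n+2) = (n+2).choose (i+1) * ((n+2) - (i+1)) :=
    Nat.choose_mul_succ_eq (n+1) (i+1)
  calc (i+1) * ((n+2) - (i+1)) * ((n+2).choose (i+1))
      = (i+1) * ((n+2).choose (i+1) * ((n+2) - (i+1))) := by ring
    _ = (i+1) * ((n+1).choose (i+1) * (n+2)) := by rw [h2]
    _ = (n+2) * ((n+1).choose (i+1) * (i+1)) := by ring
    _ = (n+2) * ((n+1) * (n.choose i)) := by rw [← h1]
    _ = (n+2)*(n+1)*(n.choose i) := by ring

lemma R_rec (k m : ℕ) : R (k+1) (m+1)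
    = ((2*m+2)*(2*m+1) : ℤ) * R k m + ((m:ℤ)+1)^2 * R k (m+1) := by
  have hdiff : R (k+1) (m+1) - ((m:ℤ)+1)^2 * R k (m+1)
      = ∑ j ∈ Finset.range (m+2),
          (-1:ℤ)^j * (((2*(m+1)).choose j : ℕ) : ℤ) *
            (-(j:ℤ) * (2*(m:ℤ)+2-(j:ℤ)) * (((m+1-j : ℕ) : ℤ))^(2*k)) := by
    simp only [R, Finset.mul_sum, ← Finset.sum_sub_distrib]
    apply Finset.sum_congr rfl
    intro j hj
    simp only [Finset.mem_range] at hj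
    have hc : ((m+1-j : ℕ) : ℤ) = (m:ℤ) + 1 - (j:ℤ) := by
      push_cast [Nat.cast_sub (by omega : j ≤ m+1)]; ring
    have h1 : (((m+1-j)^(2*(k+1)) : ℕ) : ℤ) = ((m+1-j : ℕ) : ℤ)^(2*(k+1)) := by push_cast; ring
    have h2 : (((m+1-j)^(2*k) : ℕ) : ℤ) = ((m+1-j : ℕ) : ℤ)^(2*k) := by push_cast; ring
    rw [h1, h2]
    have key : ((m+1-j : ℕ) : ℤ)^(2*(k+1)) - ((m:ℤ)+1)^2 * ((m+1-j : ℕ) : ℤ)^(2*k)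
        = -(j:ℤ) * (2*(m:ℤ)+2-(j:ℤ)) * (((m+1-j : ℕ) : ℤ))^(2*k) := by
      rw [hc]
      ring
    linear_combination ((-1:ℤ)^j * (((2*(m+1)).choose j : ℕ) : ℤ)) * key
  have hshift : ∑ j ∈ Finset.range (m+2),
        (-1:ℤ)^j * (((2*(m+1)).choose j : ℕ) : ℤ) *
          (-(j:ℤ) * (2*(m:ℤ)+2-(j:ℤ)) * (((m+1-j : ℕ) : ℤ))^(2*k))
      = ((2*m+2)*(2*m+1) : ℤ) * R k m := by
    rw [Finset.sum_range_succ' _ (m+1)]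
    simp only [Nat.cast_zero, neg_zero, zero_mul, mul_zero, add_zero]
    rw [R, Finset.mul_sum]
    apply Finset.sum_congr rfl
    intro i hi
    simp only [Finset.mem_range] at hi
    have hch := choose_helper (2*m) i
    have hcast1 : ((2*m+2 - (i+1) : ℕ) : ℤ) = 2*(m:ℤ)+2 - ((i:ℤ)+1) := by
      omega
    have hch' : ((i:ℤ)+1) * (2*(m:ℤ)+2 - ((i:ℤ)+1)) * (((2*m+2).choose (i+1) : ℕ) : ℤ)
        = ((2*m+2)*(2*m+1) : ℤ) * (((2*m).choose i : ℕ) : ℤ) := by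
      rw [← hcast1]
      exact_mod_cast congrArg (Nat.cast : ℕ → ℤ) hch
    have hm1 : (m+1-(i+1) : ℕ) = m - i := by omega
    have hpow : (((m-i : ℕ)) : ℤ)^(2*k) = (((m-i)^(2*k) : ℕ) : ℤ) := by push_cast; ring
    have hc2 : (2*(m+1)).choose (i+1) = (2*m+2).choose (i+1) := by ring_nf
    rw [hm1, hc2]
    push_cast at hch' ⊢
    linear_combination ((-1:ℤ)^i * (((m-i:ℕ)):ℤ)^(2*k)) * hch'
  linarith [hdiff, hshift]

noncomputable def c (k m : ℕ) : ℚ := 2 * (R k m : ℚ) / ((2*m).factorial : ℚ)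

lemma fact_succ2 (m : ℕ) : ((2*(m+1)).factorial : ℚ) = (2*(m:ℚ)+2) * (2*(m:ℚ)+1) * ((2*m).factorial : ℚ) := by
  have h : 2*(m+1) = (2*m+1) + 1 := by ring
  rw [h, Nat.factorial_succ]
  push_cast [Nat.factorial_succ]
  ring

lemma c_zero (k : ℕ) (hk : 1 ≤ k) : c k 0 = 0 := by
  unfold c
  rw [R_zero k hk]
  norm_num

lemma c_top (k m : ℕ) (hk : 1 ≤ k) (h : k < m) : c k m = 0 := by
  unfold c
  rw [R_vanish k m hk h]
  norm_num

lemma c_one_one : c 1 1 = 1 := by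
  unfold c
  rw [R_one_one]
  norm_num [Nat.factorial]

lemma c_rec (k m : ℕ) : c (k+1) (m+1) = c k m + ((m:ℚ)+1)^2 * c k (m+1) := by
  unfold c
  have hRq : (R (k+1) (m+1) : ℚ) = ((2*(m:ℚ)+2)*(2*(m:ℚ)+1)) * (R k m : ℚ)
      + ((m:ℚ)+1)^2 * (R k (m+1) : ℚ) := by
    have := R_rec k m
    push_cast [this]
    ring
  rw [hRq, fact_succ2]
  have h1 : ((2*m).factorial : ℚ) ≠ 0 := by positivity
  have h2 : (2*(m:ℚ)+2) ≠ 0 := by positivity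
  have h3 : (2*(m:ℚ)+1) ≠ 0 := by positivity
  field_simp

lemma basis (k : ℕ) (hk : 1 ≤ k) : ∀ y : ℚ,
    ∑ i ∈ Finset.range k, c k (i+1) * ∏ j ∈ Finset.range (i+1), (y - (j:ℚ)^2) = y^k := by
  induction k, hk using Nat.le_induction with
  | base =>
    intro y
    simp [c_one_one]
  | succ k hk ih =>
    intro y
    have step1 : ∑ i ∈ Finset.range (k+1), c (k+1) (i+1) * ∏ j ∈ Finset.range (i+1), (y - (j:ℚ)^2)
        = (∑ i ∈ Finset.range (k+1), c k i * ∏ j ∈ Finset.range (i+1), (y - (j:ℚ)^2))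
          + ∑ i ∈ Finset.range (k+1), ((i:ℚ)+1)^2 * c k (i+1) * ∏ j ∈ Finset.range (i+1), (y - (j:ℚ)^2) := by
      rw [← Finset.sum_add_distrib]
      apply Finset.sum_congr rfl
      intro i _
      rw [c_rec k i]
      ring
    have stepA : ∑ i ∈ Finset.range (k+1), c k i * ∏ j ∈ Finset.range (i+1), (y - (j:ℚ)^2)
        = ∑ i ∈ Finset.range k, c k (i+1) * ∏ j ∈ Finset.range (i+2), (y - (j:ℚ)^2) := by
      rw [Finset.sum_range_succ' _ k]
      rw [c_zero k hk]
      simp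
    have stepB : ∑ i ∈ Finset.range (k+1), ((i:ℚ)+1)^2 * c k (i+1) * ∏ j ∈ Finset.range (i+1), (y - (j:ℚ)^2)
        = ∑ i ∈ Finset.range k, ((i:ℚ)+1)^2 * c k (i+1) * ∏ j ∈ Finset.range (i+1), (y - (j:ℚ)^2) := by
      rw [Finset.sum_range_succ]
      rw [c_top k (k+1) hk (by omega)]
      ring
    rw [step1, stepA, stepB, ← Finset.sum_add_distrib]
    have step2 : ∑ i ∈ Finset.range k,
        (c k (i+1) * ∏ j ∈ Finset.range (i+2), (y - (j:ℚ)^2)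
          + ((i:ℚ)+1)^2 * c k (i+1) * ∏ j ∈ Finset.range (i+1), (y - (j:ℚ)^2))
        = y * ∑ i ∈ Finset.range k, c k (i+1) * ∏ j ∈ Finset.range (i+1), (y - (j:ℚ)^2) := by
      rw [Finset.mul_sum]
      apply Finset.sum_congr rfl
      intro i _
      rw [Finset.prod_range_succ (fun j => y - (j:ℚ)^2) (i+1)]
      push_cast
      ring
    rw [step2, ih y]
    ring


lemma Ps_eval (m : ℕ) (hm : 1 ≤ m) (u : ℚ) :
    ∑ r ∈ Finset.Icc 1 m, (Ps m r : ℚ) * u^r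
      = ∏ j ∈ Finset.range m, (u - (j:ℚ)*((j:ℚ)+1)) := by
  set Q : ℤ[X] := ∏ j ∈ Finset.range m, (X - C ((j * (j + 1) : ℕ) : ℤ)) with hQ
  set Qq : ℚ[X] := Q.map (Int.castRingHom ℚ) with hQq
  have hQqeq : Qq = ∏ j ∈ Finset.range m, (X - C ((j:ℚ)*((j:ℚ)+1))) := by
    rw [hQq, hQ, Polynomial.map_prod]
    apply Finset.prod_congr rfl
    intro j _
    rw [Polynomial.map_sub, Polynomial.map_X, Polynomial.map_C]
    have : (Int.castRingHom ℚ) ((j * (j + 1) : ℕ) : ℤ) = ((j:ℚ)*((j:ℚ)+1)) := by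
      rw [map_natCast]
      push_cast
      ring
    rw [this]
  have hdeg : Qq.natDegree < m + 1 := by
    rw [hQqeq]
    calc (∏ j ∈ Finset.range m, (X - C ((j:ℚ)*((j:ℚ)+1)))).natDegree
        ≤ ∑ j ∈ Finset.range m, (X - C ((j:ℚ)*((j:ℚ)+1))).natDegree :=
          Polynomial.natDegree_prod_le _ _
      _ ≤ ∑ j ∈ Finset.range m, 1 := by
          apply Finset.sum_le_sum
          intro j _
          rw [natDegree_X_sub_C]
      _ = m := by simp
      _ < m + 1 := by omega
  have heval : Qq.eval u = ∏ j ∈ Finset.range m, (u - (j:ℚ)*((j:ℚ)+1)) := by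
    rw [hQqeq, Polynomial.eval_prod]
    apply Finset.prod_congr rfl
    intro j _
    simp
  have hcoeff0 : Qq.coeff 0 = 0 := by
    rw [Polynomial.coeff_zero_eq_eval_zero, hQqeq, Polynomial.eval_prod]
    apply Finset.prod_eq_zero (Finset.mem_range.mpr (by omega : 0 < m))
    simp
  have hexp : Qq.eval u = ∑ i ∈ Finset.range (m+1), Qq.coeff i * u^i :=
    Polynomial.eval_eq_sum_range' hdeg u
  have hshift : ∑ i ∈ Finset.range (m+1), Qq.coeff i * u^i
      = ∑ i ∈ Finset.range m, Qq.coeff (i+1) * u^(i+1) := by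
    rw [Finset.sum_range_succ' _ m, hcoeff0]
    simp
  have hIcc : ∑ r ∈ Finset.Icc 1 m, (Ps m r : ℚ) * u^r
      = ∑ i ∈ Finset.range m, (Ps m (i+1) : ℚ) * u^(i+1) := by
    rw [← Finset.Ico_add_one_right_eq_Icc, Finset.sum_Ico_eq_sum_range]
    apply Finset.sum_congr (by norm_num)
    intro i _
    rw [Nat.add_comm 1 i]
  have hPs : ∀ r : ℕ, (Ps m r : ℚ) = Qq.coeff r := by
    intro r
    rw [hQq, Polynomial.coeff_map]
    simp [Ps, hQ]
  rw [hIcc, ← heval, hexp, hshift]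
  apply Finset.sum_congr rfl
  intro i _
  rw [hPs]

lemma prod_shift_up (m : ℕ) (x : ℚ) :
    (∏ j ∈ Finset.range m, (x + (j:ℚ) + 1)) * x
      = (∏ j ∈ Finset.range m, (x + (j:ℚ))) * (x + m) := by
  have e1 := Finset.prod_range_succ' (fun j : ℕ => x + (j:ℚ)) m
  have e2 := Finset.prod_range_succ (fun j : ℕ => x + (j:ℚ)) m
  rw [e2] at e1
  calc (∏ j ∈ Finset.range m, (x + (j:ℚ) + 1)) * x
      = (∏ j ∈ Finset.range m, (x + ((j:ℚ) + 1))) * (x + (0:ℕ)) := by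
        congr 1
        · apply Finset.prod_congr rfl; intro j _; ring
        · push_cast; ring
    _ = (∏ j ∈ Finset.range m, (x + (((j+1):ℕ):ℚ))) * (x + (0:ℕ)) := by
        congr 1
        apply Finset.prod_congr rfl
        intro j _
        push_cast
        ring
    _ = (∏ j ∈ Finset.range m, (x + (j:ℚ))) * (x + m) := by rw [e1]

lemma prod_shift_down (m : ℕ) (x : ℚ) :
    (∏ j ∈ Finset.range m, (x - (j:ℚ) - 1)) * x
      = (∏ j ∈ Finset.range m, (x - (j:ℚ))) * (x - m) := by
  have e1 := Finset.prod_range_succ' (fun j : ℕ => x - (j:ℚ)) m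
  have e2 := Finset.prod_range_succ (fun j : ℕ => x - (j:ℚ)) m
  rw [e2] at e1
  calc (∏ j ∈ Finset.range m, (x - (j:ℚ) - 1)) * x
      = (∏ j ∈ Finset.range m, (x - ((j:ℚ) + 1))) * (x - (0:ℕ)) := by
        congr 1
        · apply Finset.prod_congr rfl; intro j _; ring
        · push_cast; ring
    _ = (∏ j ∈ Finset.range m, (x - (((j+1):ℕ):ℚ))) * (x - (0:ℕ)) := by
        congr 1
        apply Finset.prod_congr rfl
        intro j _
        push_cast
        ring
    _ = (∏ j ∈ Finset.range m, (x - (j:ℚ))) * (x - m) := by rw [e1]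

lemma prod_add (m : ℕ) (x : ℚ) (hx : x ≠ 0) :
    (∏ j ∈ Finset.range m, (x*x + x - (j:ℚ)*((j:ℚ)+1)))
      + ∏ j ∈ Finset.range m, (x*x - x - (j:ℚ)*((j:ℚ)+1))
    = 2 * ∏ j ∈ Finset.range m, (x*x - (j:ℚ)^2) := by
  have hA : ∏ j ∈ Finset.range m, (x*x + x - (j:ℚ)*((j:ℚ)+1))
      = (∏ j ∈ Finset.range m, (x - (j:ℚ))) * ∏ j ∈ Finset.range m, (x + (j:ℚ) + 1) := by
    rw [← Finset.prod_mul_distrib]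
    apply Finset.prod_congr rfl
    intro j _
    ring
  have hB : ∏ j ∈ Finset.range m, (x*x - x - (j:ℚ)*((j:ℚ)+1))
      = (∏ j ∈ Finset.range m, (x + (j:ℚ))) * ∏ j ∈ Finset.range m, (x - (j:ℚ) - 1) := by
    rw [← Finset.prod_mul_distrib]
    apply Finset.prod_congr rfl
    intro j _
    ring
  have hP : ∏ j ∈ Finset.range m, (x*x - (j:ℚ)^2)
      = (∏ j ∈ Finset.range m, (x - (j:ℚ))) * ∏ j ∈ Finset.range m, (x + (j:ℚ)) := by
    rw [← Finset.prod_mul_distrib]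
    apply Finset.prod_congr rfl
    intro j _
    ring
  apply mul_right_cancel₀ hx
  rw [hA, hB, hP]
  have h1 := prod_shift_up m x
  have h2 := prod_shift_down m x
  calc ((∏ j ∈ Finset.range m, (x - (j:ℚ))) * ∏ j ∈ Finset.range m, (x + (j:ℚ) + 1)
      + (∏ j ∈ Finset.range m, (x + (j:ℚ))) * ∏ j ∈ Finset.range m, (x - (j:ℚ) - 1)) * x
      = (∏ j ∈ Finset.range m, (x - (j:ℚ))) * ((∏ j ∈ Finset.range m, (x + (j:ℚ) + 1)) * x)
        + (∏ j ∈ Finset.range m, (x + (j:ℚ))) * ((∏ j ∈ Finset.range m, (x - (j:ℚ) - 1)) * x) := by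
        ring
    _ = (∏ j ∈ Finset.range m, (x - (j:ℚ))) * ((∏ j ∈ Finset.range m, (x + (j:ℚ))) * (x + m))
        + (∏ j ∈ Finset.range m, (x + (j:ℚ))) * ((∏ j ∈ Finset.range m, (x - (j:ℚ))) * (x - m)) := by
        rw [h1, h2]
    _ = 2 * ((∏ j ∈ Finset.range m, (x - (j:ℚ))) * ∏ j ∈ Finset.range m, (x + (j:ℚ))) * x := by
        ring


lemma hswap (k : ℕ) (hk : 1 ≤ k) (t u : ℚ) (htu : 2*t = u) :
    ∑ r ∈ Finset.Icc 1 k, d k r * t^r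
      = ∑ m ∈ Finset.Icc 1 k, (R k m : ℚ)/(((2*m).factorial : ℕ) : ℚ)
          * ∏ j ∈ Finset.range m, (u - (j:ℚ)*((j:ℚ)+1)) := by
  have step1 : ∑ r ∈ Finset.Icc 1 k, d k r * t^r
      = ∑ r ∈ Finset.Icc 1 k, ∑ m ∈ Finset.Icc r k,
          (R k m : ℚ)/(((2*m).factorial : ℕ) : ℚ) * ((Ps m r : ℚ) * u^r) := by
    apply Finset.sum_congr rfl
    intro r _
    rw [d, Finset.sum_mul]
    apply Finset.sum_congr rfl
    intro m _
    have hu : u^r = 2^r * t^r := by rw [← htu, mul_pow]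
    rw [hu]
    ring
  rw [step1]
  rw [Finset.sum_comm' (t' := Finset.Icc 1 k) (s' := fun m => Finset.Icc 1 m)
    (by intro r m; simp only [Finset.mem_Icc]; omega)]
  apply Finset.sum_congr rfl
  intro m hm
  simp only [Finset.mem_Icc] at hm
  rw [← Finset.mul_sum, Ps_eval m hm.1 u]

lemma key (k : ℕ) (hk : 1 ≤ k) (x : ℚ) (hx : x ≠ 0) :
    (∑ r ∈ Finset.Icc 1 k, d k r * (x*(x+1)/2)^r)
      + (∑ r ∈ Finset.Icc 1 k, d k r * (x*(x-1)/2)^r) = x^(2*k) := by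
  rw [hswap k hk (x*(x+1)/2) (x*x+x) (by ring), hswap k hk (x*(x-1)/2) (x*x-x) (by ring)]
  rw [← Finset.sum_add_distrib]
  have step2 : ∑ m ∈ Finset.Icc 1 k,
      ((R k m : ℚ)/(((2*m).factorial : ℕ) : ℚ) * ∏ j ∈ Finset.range m, (x*x+x - (j:ℚ)*((j:ℚ)+1))
        + (R k m : ℚ)/(((2*m).factorial : ℕ) : ℚ) * ∏ j ∈ Finset.range m, (x*x-x - (j:ℚ)*((j:ℚ)+1)))
      = ∑ m ∈ Finset.Icc 1 k, c k m * ∏ j ∈ Finset.range m, (x*x - (j:ℚ)^2) := by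
    apply Finset.sum_congr rfl
    intro m _
    rw [← mul_add]
    have hpa := prod_add m x hx
    have : ∀ j : ℕ, (x*x+x - (j:ℚ)*((j:ℚ)+1)) = (x*x + x - (j:ℚ)*((j:ℚ)+1)) := fun _ => rfl
    rw [show (∏ j ∈ Finset.range m, (x*x+x - (j:ℚ)*((j:ℚ)+1)))
        = ∏ j ∈ Finset.range m, (x*x + x - (j:ℚ)*((j:ℚ)+1)) from rfl]
    rw [show (∏ j ∈ Finset.range m, (x*x-x - (j:ℚ)*((j:ℚ)+1)))
        = ∏ j ∈ Finset.range m, (x*x - x - (j:ℚ)*((j:ℚ)+1)) from rfl]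
    rw [hpa, c]
    ring
  rw [step2]
  have step3 : ∑ m ∈ Finset.Icc 1 k, c k m * ∏ j ∈ Finset.range m, (x*x - (j:ℚ)^2)
      = ∑ i ∈ Finset.range k, c k (i+1) * ∏ j ∈ Finset.range (i+1), (x*x - (j:ℚ)^2) := by
    rw [← Finset.Ico_add_one_right_eq_Icc, Finset.sum_Ico_eq_sum_range]
    apply Finset.sum_congr (by norm_num)
    intro i _
    rw [Nat.add_comm 1 i]
  rw [step3, basis k hk (x*x)]
  rw [pow_mul]
  ring_nf



lemma Om_one (K : ℕ) : Om K 1 = 1 := by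
  simp [Om]

lemma Om_succ (K n : ℕ) : Om K (n+1) = (((n+1)^K : ℕ) : ℤ) - Om K n := by
  unfold Om
  rw [Finset.sum_Icc_succ_top (by omega : 1 ≤ n+1)]
  have hcongr : ∑ i ∈ Finset.Icc 1 n, (-1 : ℤ) ^ (n+1-i) * ((i ^ K : ℕ) : ℤ)
      = ∑ i ∈ Finset.Icc 1 n, -((-1 : ℤ) ^ (n-i) * ((i ^ K : ℕ) : ℤ)) := by
    apply Finset.sum_congr rfl
    intro i hi
    simp only [Finset.mem_Icc] at hi
    rw [show n+1-i = (n-i)+1 by omega, pow_succ]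
    ring
  rw [hcongr, Finset.sum_neg_distrib]
  simp
  ring

lemma S_step (n : ℕ) : (S 1 (n+1) : ℚ) = (S 1 n : ℚ) + ((n:ℚ)+1) := by
  unfold S
  rw [Finset.sum_Icc_succ_top (by omega : 1 ≤ n+1)]
  push_cast
  ring

lemma S_gauss (n : ℕ) : (S 1 n : ℚ) * 2 = (n:ℚ) * ((n:ℚ)+1) := by
  induction n with
  | zero => simp [S]
  | succ n ih =>
    rw [S_step]
    push_cast
    ring_nf
    ring_nf at ih
    linarith

theorem stmt_14 (k n : ℕ) (hk : 1 ≤ k) (hn : 1 ≤ n) :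
    (Om (2 * k) n : ℚ) = ∑ r ∈ Finset.Icc 1 k, d k r * (S 1 n : ℚ) ^ r := by
  induction n, hn using Nat.le_induction with
  | base =>
    rw [Om_one]
    have hS1 : (S 1 1 : ℚ) = 1 := by norm_num [S]
    have hkey := key k hk 1 one_ne_zero
    have h2 : ∑ r ∈ Finset.Icc 1 k, d k r * ((1:ℚ)*((1:ℚ)-1)/2)^r = 0 := by
      apply Finset.sum_eq_zero
      intro r hr
      simp only [Finset.mem_Icc] at hr
      rw [show (1:ℚ)*((1:ℚ)-1)/2 = 0 by norm_num, zero_pow (by omega : r ≠ 0)]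
      ring
    rw [h2, add_zero] at hkey
    rw [hS1, show ((1:ℤ):ℚ) = 1 by norm_num]
    simp only [one_pow, mul_one]
    norm_num at hkey
    exact hkey.symm
  | succ n hn ih =>
    have hOm : (Om (2*k) (n+1) : ℚ) = (((n:ℚ)+1))^(2*k) - (Om (2*k) n : ℚ) := by
      rw [Om_succ]
      push_cast
      ring
    set x : ℚ := (n:ℚ) + 1 with hx
    have hx0 : x ≠ 0 := by positivity
    have hkey := key k hk x hx0
    have hSn : (S 1 n : ℚ) = x*(x-1)/2 := by
      have := S_gauss n
      rw [hx]
      linarith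
    have hSn1 : (S 1 (n+1) : ℚ) = x*(x+1)/2 := by
      have := S_gauss (n+1)
      push_cast at this
      rw [hx]
      linarith
    rw [hOm, ih, hSn1, hSn] at *
    linarith [hkey]
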